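/- Let $(A_I)_{I \in \mathbb{Z}_{\ge 0}^2}$ be a doubly-indexed real sequence and $(b_i)_{i \ge 0}$ a real sequence. With $\Delta^0 b = b$, $\Delta^1 b_i = b_i - b_{i+1}$, $\Delta^2 b_i = \Delta^1 b_i - \Delta^1 b_{i+1}$, and the iterated sums $A^{(r_1+1, r_2+1)}$ defined by applying, in each coordinate $j$: a single sum $\sum_{i_j=0}^{\kappa_j}$ if $r_j = 0$; a double sum $\sum_{t_j=0}^{\kappa_j}\sum_{i_j=0}^{t_j}$ if $r_j = 1$; and $(\Delta^2 b_{\kappa_j})^{-1} \sum_{\alpha_j=0}^{\kappa_j} \Delta^2 b_{\alpha_j} \sum_{t_j=0}^{\alpha_j} \sum_{i_j=0}^{t_j}$ if $r_j = 2$ (assuming $\Delta^2 b_{\kappa_j} \ne 0$), the identity holds for all $n_1, n_2 \ge 2$: $\sum_{i_1=0}^{n_1}\sum_{i_2=0}^{n_2} A_{i_1,i_2} b_{i_1} b_{i_2} = \sum_{r_1=0}^{2}\sum_{r_2=0}^{2} \Delta^{r_1} b_{n_1-r_1} \Delta^{r_2} b_{n_2-r_2} \, A^{(r_1+1, r_2+1)}_{n_1-r_1,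 n_2-r_2}$. -/

import Mathlib

open Finset

/-- Second difference `Δ² b`. -/
def D2 (b : ℕ → ℝ) (i : ℕ) : ℝ := b i - 2 * b (i + 1) + b (i + 2)

/-- `Δ^r b` for `r = 0, 1, 2`. -/
def Dr (b : ℕ → ℝ) (r i : ℕ) : ℝ :=
  match r with
  | 0 => b i
  | 1 => b i - b (i + 1)
  | _ => D2 b i

/-- The one-coordinate iterated-sum transform `A ↦ A^{(r+1)}`. -/
noncomputable def iterSum (b : ℕ → ℝ) (r : ℕ) (f : ℕ → ℝ) (κ : ℕ) : ℝ :=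
  match r with
  | 0 => ∑ i ∈ range (κ + 1), f i
  | 1 => ∑ t ∈ range (κ + 1), ∑ i ∈ range (t + 1), f i
  | _ => (D2 b κ)⁻¹ *
      ∑ α ∈ range (κ + 1), D2 b α * ∑ t ∈ range (α + 1), ∑ i ∈ range (t + 1), f i

/-- The two-coordinate iterated sum `A^{(r₁+1, r₂+1)}_{κ₁, κ₂}`. -/
noncomputable def iterSum2 (b : ℕ → ℝ) (r1 r2 : ℕ) (A : ℕ → ℕ → ℝ) (κ1 κ2 : ℕ) : ℝ :=
  iterSum b r2 (fun i2 => iterSum b r1 (fun i1 => A i1 i2) κ1) κ2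

lemma abel1 (f b : ℕ → ℝ) (m : ℕ) :
    ∑ i ∈ range (m + 3), f i * b i =
      b (m + 2) * (∑ i ∈ range (m + 3), f i)
      + (b (m + 1) - b (m + 2)) * (∑ t ∈ range (m + 2), ∑ i ∈ range (t + 1), f i)
      + ∑ α ∈ range (m + 1), D2 b α * ∑ t ∈ range (α + 1), ∑ i ∈ range (t + 1), f i := by
  induction m with
  | zero => simp [sum_range_succ, D2]; ring
  | succ m ih =>
      simp only [show m + 1 + 3 = m + 4 by omega, show m + 1 + 2 = m + 3 by omega,
        show m + 1 + 1 = m + 2 by omega]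
      have L : ∑ i ∈ range (m + 4), f i * b i
          = (∑ i ∈ range (m + 3), f i * b i) + f (m + 3) * b (m + 3) := by
        rw [show m + 4 = m + 3 + 1 by omega, sum_range_succ]
      have R1 : ∑ i ∈ range (m + 4), f i
          = (∑ i ∈ range (m + 3), f i) + f (m + 3) := by
        rw [show m + 4 = m + 3 + 1 by omega, sum_range_succ]
      have R2 : ∑ t ∈ range (m + 3), ∑ i ∈ range (t + 1), f i
          = (∑ t ∈ range (m + 2), ∑ i ∈ range (t + 1), f i) + ∑ i ∈ range (m + 3), f i := by
        rw [show m + 3 = m + 2 + 1 by omega, sum_range_succ]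
      have R3 : ∑ α ∈ range (m + 2), D2 b α * ∑ t ∈ range (α + 1), ∑ i ∈ range (t + 1), f i
          = (∑ α ∈ range (m + 1), D2 b α * ∑ t ∈ range (α + 1), ∑ i ∈ range (t + 1), f i)
            + D2 b (m + 1) * ∑ t ∈ range (m + 2), ∑ i ∈ range (t + 1), f i := by
        rw [show m + 2 = m + 1 + 1 by omega, sum_range_succ]
      rw [L, ih, R1, R2, R3]
      simp only [D2]
      ring

lemma oneD (f b : ℕ → ℝ) (n : ℕ) (hn : 2 ≤ n) (hb : D2 b (n - 2) ≠ 0) :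
    ∑ i ∈ range (n + 1), f i * b i =
      ∑ r ∈ range 3, Dr b r (n - r) * iterSum b r f (n - r) := by
  obtain ⟨m, rfl⟩ : ∃ m, n = m + 2 := ⟨n - 2, by omega⟩
  have expand : ∀ g : ℕ → ℝ, ∑ r ∈ range 3, g r = g 0 + g 1 + g 2 := by
    intro g
    rw [show (3 : ℕ) = 2 + 1 from rfl, sum_range_succ, show (2 : ℕ) = 1 + 1 from rfl,
      sum_range_succ, sum_range_one]
  rw [expand]
  simp only [show m + 2 - 0 = m + 2 by omega, show m + 2 - 1 = m + 1 by omega,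
    show m + 2 - 2 = m by omega] at *
  simp only [Dr, iterSum]
  rw [show m + 2 + 1 = m + 3 by omega, show m + 1 + 1 = m + 2 by omega]
  rw [abel1 f b m, mul_inv_cancel_left₀ hb]

lemma swap1 (g : ℕ → ℕ → ℝ) (c : ℕ → ℝ) (s : Finset ℕ) (N : ℕ) :
    ∑ i ∈ range N, ∑ j ∈ s, g j i * c j = ∑ j ∈ s, (∑ i ∈ range N, g j i) * c j := by
  rw [sum_comm]
  exact sum_congr rfl fun j _ => by rw [sum_mul]

lemma swap2 (F : ℕ → ℕ → ℝ) (c : ℕ → ℝ) (s : Finset ℕ) (κ : ℕ) :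
    ∑ t ∈ range (κ + 1), ∑ i ∈ range (t + 1), ∑ j ∈ s, F j i * c j
      = ∑ j ∈ s, (∑ t ∈ range (κ + 1), ∑ i ∈ range (t + 1), F j i) * c j := by
  calc ∑ t ∈ range (κ + 1), ∑ i ∈ range (t + 1), ∑ j ∈ s, F j i * c j
      = ∑ t ∈ range (κ + 1), ∑ j ∈ s, (∑ i ∈ range (t + 1), F j i) * c j :=
        sum_congr rfl fun t _ => swap1 F c s (t + 1)
    _ = ∑ j ∈ s, (∑ t ∈ range (κ + 1), ∑ i ∈ range (t + 1), F j i) * c j :=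
        swap1 (fun j t => ∑ i ∈ range (t + 1), F j i) c s (κ + 1)

lemma iterSum_sum (b : ℕ → ℝ) (r : ℕ) (F : ℕ → ℕ → ℝ) (c : ℕ → ℝ) (s : Finset ℕ) (κ : ℕ) :
    iterSum b r (fun i => ∑ j ∈ s, F j i * c j) κ
      = ∑ j ∈ s, iterSum b r (F j) κ * c j := by
  match r with
  | 0 => exact swap1 F c s (κ + 1)
  | 1 => exact swap2 F c s κ
  | (n + 2) =>
    simp only [iterSum]
    have key : (∑ α ∈ range (κ + 1), D2 b α *
          ∑ t ∈ range (α + 1), ∑ i ∈ range (t + 1), ∑ j ∈ s, F j i * c j)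
        = ∑ j ∈ s,
            (∑ α ∈ range (κ + 1), D2 b α * ∑ t ∈ range (α + 1), ∑ i ∈ range (t + 1), F j i)
              * c j := by
      calc ∑ α ∈ range (κ + 1), D2 b α *
              ∑ t ∈ range (α + 1), ∑ i ∈ range (t + 1), ∑ j ∈ s, F j i * c j
          = ∑ α ∈ range (κ + 1), ∑ j ∈ s,
              D2 b α * ((∑ t ∈ range (α + 1), ∑ i ∈ range (t + 1), F j i) * c j) := by
            refine sum_congr rfl fun α _ => ?_
            rw [swap2, mul_sum]
        _ = ∑ j ∈ s, ∑ α ∈ range (κ + 1),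
              D2 b α * ((∑ t ∈ range (α + 1), ∑ i ∈ range (t + 1), F j i) * c j) := Finset.sum_comm
        _ = ∑ j ∈ s,
              (∑ α ∈ range (κ + 1), D2 b α * ∑ t ∈ range (α + 1), ∑ i ∈ range (t + 1), F j i)
                * c j := by
            refine sum_congr rfl fun j _ => ?_
            rw [sum_mul]
            exact sum_congr rfl fun α _ => by ring
    rw [key, mul_sum]
    exact sum_congr rfl fun j _ => by ring

/-- Proposition 1 of the paper for `ν = 2`: the two-dimensional double-Abel-transformation
identity. -/
theorem stmt17 (A : ℕ → ℕ → ℝ) (b : ℕ → ℝ) (n1 n2 : ℕ) (hn1 : 2 ≤ n1) (hn2 : 2 ≤ n2)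
    (hb1 : D2 b (n1 - 2) ≠ 0) (hb2 : D2 b (n2 - 2) ≠ 0) :
    ∑ i1 ∈ range (n1 + 1), ∑ i2 ∈ range (n2 + 1), A i1 i2 * b i1 * b i2 =
      ∑ r1 ∈ range 3, ∑ r2 ∈ range 3,
        Dr b r1 (n1 - r1) * Dr b r2 (n2 - r2) * iterSum2 b r1 r2 A (n1 - r1) (n2 - r2) := by
  have step1 : ∑ i1 ∈ range (n1 + 1), ∑ i2 ∈ range (n2 + 1), A i1 i2 * b i1 * b i2
      = ∑ i1 ∈ range (n1 + 1), (∑ i2 ∈ range (n2 + 1), A i1 i2 * b i2) * b i1 := by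
    refine sum_congr rfl fun i1 _ => ?_
    rw [sum_mul]
    exact sum_congr rfl fun i2 _ => by ring
  rw [step1, oneD _ b n1 hn1 hb1]
  refine Finset.sum_congr rfl fun r1 _ => ?_
  rw [iterSum_sum b r1 (fun i2 i1 => A i1 i2) b (range (n2 + 1)) (n1 - r1)]
  rw [oneD _ b n2 hn2 hb2, mul_sum]
  refine Finset.sum_congr rfl fun r2 _ => ?_
  simp only [iterSum2]
  ring
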